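/- Let P ⊆ Q ⊆ ℝ^{k-1} be polytopes with vertices of P being v₁,…,v_m and Q defined by affine-linear inequalities f₁ ≥ 0, …, f_n ≥ 0. Define the slack matrix A ∈ ℝ^{n×m} by A_{ji} = f_j(v_i). If there exists a simplex Δ with k vertices satisfying P ⊆ Δ ⊆ Q, then A admits a nonnegative factorization A = BC with B ∈ ℝ^{n×k}, C ∈ ℝ^{k×m} nonnegative. -/

import Mathlib

/-- If the polytope `P = conv{v₁,…,v_m}` is contained in a simplex `Δ = conv{d₁,…,d_k}`
(`k = d+1` vertices in `ℝ^d`), which is contained in `Q = {x | ∀ j, f_j x ≥ 0}` for affine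
functions `f_j`, then the slack matrix `A`, `A j i = f j (v i)`, admits a nonnegative
factorization `A = B * C` with inner dimension `k = d+1`. -/
theorem stmt3 {d m n : ℕ} (v : Fin m → (Fin d → ℝ))
    (f : Fin n → ((Fin d → ℝ) →ᵃ[ℝ] ℝ))
    (dpts : Fin (d + 1) → (Fin d → ℝ))
    (Q : Set (Fin d → ℝ)) (hQ : Q = {x | ∀ j, 0 ≤ f j x})
    (hPΔ : convexHull ℝ (Set.range v) ⊆ convexHull ℝ (Set.range dpts))
    (hΔQ : convexHull ℝ (Set.range dpts) ⊆ Q)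
    (A : Matrix (Fin n) (Fin m) ℝ) (hA : ∀ j i, A j i = f j (v i)) :
    ∃ (B : Matrix (Fin n) (Fin (d + 1)) ℝ) (C : Matrix (Fin (d + 1)) (Fin m) ℝ),
      (∀ j l, 0 ≤ B j l) ∧ (∀ l i, 0 ≤ C l i) ∧ A = B * C := by
  -- For each i, v i lies in the simplex, so it is a convex combination of the dpts.
  have hv : ∀ i : Fin m, ∃ w : Fin (d + 1) → ℝ, (∀ l, 0 ≤ w l) ∧
      Finset.univ.sum w = 1 ∧ Finset.univ.affineCombination ℝ dpts w = v i := by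
    intro i
    have hmem : v i ∈ convexHull ℝ (Set.range dpts) :=
      hPΔ (subset_convexHull ℝ _ ⟨i, rfl⟩)
    rw [convexHull_range_eq_exists_affineCombination] at hmem
    obtain ⟨s, w, hw0, hw1, hwc⟩ := hmem
    refine ⟨(s : Set (Fin (d + 1))).indicator w, ?_, ?_, ?_⟩
    · intro l
      by_cases hl : l ∈ s
      · simp [Set.indicator, hl, hw0 l hl]
      · simp [Set.indicator, hl]
    · exact (Finset.sum_indicator_subset w s.subset_univ).trans hw1
    · rw [← Finset.affineCombination_indicator_subset w dpts s.subset_univ, hwc]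
  choose C hC0 hC1 hCc using hv
  refine ⟨fun j l => f j (dpts l), fun l i => C i l, ?_, fun l i => hC0 i l, ?_⟩
  · intro j l
    have : dpts l ∈ Q := hΔQ (subset_convexHull ℝ _ ⟨l, rfl⟩)
    rw [hQ] at this
    exact this j
  · ext j i
    rw [hA, ← hCc i, Finset.map_affineCombination _ _ _ (hC1 i),
      Finset.affineCombination_eq_linear_combination _ _ _ (by
        simpa using hC1 i)]
    change _ = ∑ l, f j (dpts l) * C i l
    simp [mul_comm]
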